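/- On a weak almost para-S-manifold, the tensors N^{(2)}_i(X,Y) = (£_{fX}η^i)Y - (£_{fY}η^i)X and N^{(4)}_{ij}(X) = 2 dη^j(ξ_i, X) vanish identically. -/
import Mathlib


open scoped BigOperators

noncomputable section

variable (C V : Type*) [CommRing C] [Algebra ℝ C] [AddCommGroup V]
  [Module ℝ V] [Module C V] [IsScalarTower ℝ C V]

/-- A metric weak para-f-structure on a manifold, modelled algebraically:
`C` plays the role of the ring of smooth functions, `V` the `C`-module of vector fields
with Lie bracket `b` and derivation action `act` of vector fields on functions,
`g` is a compatible pseudo-Riemannian metric (with `f` of rank `2n`, encoded by `hrank`)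
and `nabla` its Levi-Civita connection (torsion-free and metric). -/
structure MWPF (p : ℕ) where
  f : V →ₗ[C] V
  Q : V →ₗ[C] V
  ξ : Fin p → V
  η : Fin p → V →ₗ[C] C
  g : V →ₗ[C] V →ₗ[C] C
  b : V → V → V
  act : V → C → C
  nabla : V → V → V
  hQbij : Function.Bijective Q
  hf2 : ∀ X, f (f X) = Q X - ∑ i, η i X • ξ i
  hf3 : ∀ X, f (f (f X)) = f (Q X)
  hetaxi : ∀ i j, η i (ξ j) = if i = j then (1 : C) else 0
  hQxi : ∀ i, Q (ξ i) = ξ i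
  hrange : ∀ X : V, X ∈ LinearMap.range f ↔ ∀ i, η i X = 0
  hgsymm : ∀ X Y, g X Y = g Y X
  hgnondeg : ∀ X, (∀ Y, g X Y = 0) → X = 0
  hrank : ∀ Z, (∀ i, η i Z = 0) → (∀ Y, g Z (f Y) = 0) → Z = 0
  hgcompat : ∀ X Y, g (f X) (f Y) = -(g X (Q Y)) + ∑ i, η i X * η i Y
  hbskew : ∀ X Y, b X Y = - b Y X
  hbaddl : ∀ X Y Z, b (X + Y) Z = b X Z + b Y Z
  hjacobi : ∀ X Y Z, b X (b Y Z) + b Y (b Z X) + b Z (b X Y) = 0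
  hactadd : ∀ X a c, act X (a + c) = act X a + act X c
  hactmul : ∀ X a c, act X (a * c) = act X a * c + a * act X c
  hactX : ∀ (a : C) X Y c, act (a • X + Y) c = a * act X c + act Y c
  hbleib : ∀ X (a : C) Y, b X (a • Y) = act X a • Y + a • b X Y
  hnab1 : ∀ (a : C) X X' Y, nabla (a • X + X') Y = a • nabla X Y + nabla X' Y
  hnabadd : ∀ X Y Z, nabla X (Y + Z) = nabla X Y + nabla X Z
  hnableib : ∀ X (a : C) Y, nabla X (a • Y) = act X a • Y + a • nabla X Y
  htors : ∀ X Y, nabla X Y - nabla Y X = b X Y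
  hmetric : ∀ X Y Z, act X (g Y Z) = g (nabla X Y) Z + g Y (nabla X Z)

namespace MWPF

variable {C V} {p : ℕ} (s : MWPF C V p)

/-- The fundamental 2-form `Φ(X,Y) = g(X, fY)`. -/
def Phi (X Y : V) : C := s.g X (s.f Y)

/-- `dη^i(X,Y) = (1/2)(X(η^i Y) - Y(η^i X) - η^i [X,Y])`. -/
def dEta (i : Fin p) (X Y : V) : C :=
  (2⁻¹ : ℝ) • (s.act X (s.η i Y) - s.act Y (s.η i X) - s.η i (s.b X Y))

/-- The Nijenhuis torsion `[f,f]`. -/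
def Nij (X Y : V) : V :=
  s.f (s.f (s.b X Y)) + s.b (s.f X) (s.f Y) - s.f (s.b (s.f X) Y) - s.f (s.b X (s.f Y))

/-- `N^(1)(X,Y) = [f,f](X,Y) - 2 Σ_i dη^i(X,Y) ξ_i`. -/
def N1 (X Y : V) : V := s.Nij X Y - (2 : ℝ) • ∑ i, s.dEta i X Y • s.ξ i

/-- The difference tensor `Q̃ = Q - id`. -/
def Qt (X : V) : V := s.Q X - X

/-- The Lie derivative of `f`: `(£_Z f)X = [Z, fX] - f[Z,X]`. -/
def Lief (Z X : V) : V := s.b Z (s.f X) - s.f (s.b Z X)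

/-- The Lie derivative of `g`: `(£_Z g)(X,Y) = Z(g(X,Y)) - g([Z,X],Y) - g(X,[Z,Y])`. -/
def Lieg (Z X Y : V) : C := s.act Z (s.g X Y) - s.g (s.b Z X) Y - s.g X (s.b Z Y)

/-- `N^(2)_i(X,Y) = (£_{fX} η^i)Y - (£_{fY} η^i)X`. -/
def N2 (i : Fin p) (X Y : V) : C :=
  (s.act (s.f X) (s.η i Y) - s.η i (s.b (s.f X) Y))
    - (s.act (s.f Y) (s.η i X) - s.η i (s.b (s.f Y) X))

/-- The exterior differential of the fundamental 2-form. -/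
def dPhi (X Y Z : V) : C := (3⁻¹ : ℝ) •
  (s.act X (s.Phi Y Z) + s.act Y (s.Phi Z X) + s.act Z (s.Phi X Y)
    - s.Phi (s.b X Y) Z - s.Phi (s.b Z X) Y - s.Phi (s.b Y Z) X)

/-- The tensor `h_i = (1/2) £_{ξ_i} f`. -/
def hmap (i : Fin p) (X : V) : V := (2⁻¹ : ℝ) • s.Lief (s.ξ i) X

/-- The tensor `N^(5)`. -/
def N5 (X Y Z : V) : C :=
  s.act (s.f Z) (s.g X (s.Qt Y)) - s.act (s.f Y) (s.g X (s.Qt Z))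
    + s.g (s.b X (s.f Z)) (s.Qt Y) - s.g (s.b X (s.f Y)) (s.Qt Z)
    + s.g (s.b Y (s.f Z) - s.b Z (s.f Y) - s.f (s.b Y Z)) (s.Qt X)

/-- The curvature tensor of `nabla`. -/
def Rm (X Y Z : V) : V :=
  s.nabla X (s.nabla Y Z) - s.nabla Y (s.nabla X Z) - s.nabla (s.b X Y) Z

end MWPF

/-- on a weak almost para-S-manifold (`dη^i = Φ`), the tensors
`N^(2)_i` and `N^(4)_{ij}(X) = 2 dη^j(ξ_i, X)` vanish identically. -/
theorem paraS_N2_N4_vanish {C V : Type*} [CommRing C] [Algebra ℝ C] [AddCommGroup V]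
    [Module ℝ V] [Module C V] [IsScalarTower ℝ C V] {p : ℕ} (s : MWPF C V p)
    (hS : ∀ (i : Fin p) (X Y : V), s.dEta i X Y = s.Phi X Y) :
    (∀ (i : Fin p) (X Y : V), s.N2 i X Y = 0) ∧
    (∀ (i j : Fin p) (X : V), s.dEta j (s.ξ i) X = 0) := by

  -- basic facts
  have act0 : ∀ X : V, s.act X 0 = 0 := by
    intro X
    have h := s.hactadd X 0 0
    rw [add_zero] at h
    exact (left_eq_add.mp h)
  have dskew : ∀ (i : Fin p) (X Y : V), s.dEta i X Y = - s.dEta i Y X := by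
    intro i X Y
    unfold MWPF.dEta
    rw [s.hbskew X Y, map_neg, ← smul_neg]
    congr 1
    ring
  have etafX : ∀ (i : Fin p) (X : V), s.η i (s.f X) = 0 := by
    intro i X
    exact (s.hrange (s.f X)).mp ⟨X, rfl⟩ i
  -- the case p = 0 vs having an index: we only need phiskew when an index exists
  have phiskew : ∀ (i : Fin p) (X Y : V), s.Phi X Y = - s.Phi Y X := by
    intro i X Y
    rw [← hS i X Y, ← hS i Y X]
    exact dskew i X Y
  have ffxi : ∀ i : Fin p, s.f (s.f (s.ξ i)) = 0 := by
    intro i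
    rw [s.hf2, s.hQxi, sub_eq_zero]
    rw [Finset.sum_congr rfl (fun j _ => by rw [s.hetaxi j i])]
    simp
  have fxi : ∀ i : Fin p, s.f (s.ξ i) = 0 := by
    intro i
    apply s.hrank
    · intro j; exact etafX j (s.ξ i)
    · intro Y
      have h1 : s.g (s.f (s.ξ i)) (s.f Y) = s.Phi (s.f (s.ξ i)) Y := rfl
      rw [h1, phiskew i, MWPF.Phi, ffxi i, map_zero, neg_zero]
  constructor
  · intro i X Y
    have twodeta : ∀ (Z W : V),
        s.act (s.f Z) (s.η i W) - s.η i (s.b (s.f Z) W) = (2:ℝ) • s.dEta i (s.f Z) W := by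
      intro Z W
      unfold MWPF.dEta
      rw [etafX i Z, act0, sub_zero, smul_smul]
      norm_num
    have : s.N2 i X Y = (2:ℝ) • s.dEta i (s.f X) Y - (2:ℝ) • s.dEta i (s.f Y) X := by
      rw [MWPF.N2, twodeta X Y, twodeta Y X]
    rw [this, hS i, hS i, MWPF.Phi, MWPF.Phi, s.hgsymm (s.f X) (s.f Y), sub_self]
  · intro i j X
    rw [hS j, phiskew j, MWPF.Phi, fxi i, map_zero, neg_zero]
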